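/- Let L ≥ 1, let γ_1,…,γ_L be real numbers and a_1,…,a_L nonnegative integers, and define e_p(z) = (z + ip/2)/(z − ip/2) for real p and complex z. Then the following are equivalent: (i) for every nonnegative integer M and every real λ such that all denominators involved are nonzero, ∏_{ℓ=1}^{L} ∏_{r=0}^{M} e_{a_ℓ−M+2r}(λ + iγ_ℓ) · e_{−(a_ℓ−M+2r)}(λ − iγ_ℓ) = 1; (ii) for every integer p with 0 ≤ p ≤ L, ∑_{ℓ=1}^{L} (γ_ℓ + a_ℓ/2)^{2p} = ∑_{ℓ=1}^{L} (γ_ℓ − a_ℓ/2)^{2p}. -/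

import Mathlib

open Complex BigOperators

/-- The rational function `e_p(z) = (z + ip/2)/(z - ip/2)`. -/
noncomputable def eFn (p : ℝ) (z : ℂ) : ℂ :=
  (z + Complex.I * (p : ℂ) / 2) / (z - Complex.I * (p : ℂ) / 2)

private lemma term_eq (p g lam : ℝ) :
    eFn p ((lam:ℂ) + Complex.I * (g:ℂ)) * eFn (-p) ((lam:ℂ) - Complex.I * (g:ℂ)) =
      ((lam^2 + (g + p/2)^2 : ℝ) : ℂ) / ((lam^2 + (g - p/2)^2 : ℝ) : ℂ) := by
  unfold eFn
  rw [div_mul_div_comm]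
  congr 1
  · push_cast
    linear_combination (-((g:ℂ)+(p:ℂ)/2)^2) * Complex.I_sq
  · push_cast
    linear_combination (-((g:ℂ)-(p:ℂ)/2)^2) * Complex.I_sq

private lemma newton_real {L : ℕ} (f : Fin L → ℝ) (k : ℕ) :
    (k : ℝ) * (Multiset.map f Finset.univ.val).esymm k =
      (-1) ^ (k + 1) * ∑ a ∈ (Finset.HasAntidiagonal.antidiagonal k).filter (fun a => a.1 < k),
        (-1) ^ a.1 * (Multiset.map f Finset.univ.val).esymm a.1 * (∑ i, f i ^ a.2) := by
  have h := congrArg (MvPolynomial.aeval f) (MvPolynomial.mul_esymm_eq_sum (Fin L) ℝ k)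
  simpa [MvPolynomial.psum, MvPolynomial.aeval_esymm_eq_multiset_esymm,
    map_sum, map_mul, map_pow] using h

private lemma esymm_eq {L : ℕ} (f g : Fin L → ℝ)
    (h : ∀ p ≤ L, ∑ i, f i ^ p = ∑ i, g i ^ p) :
    ∀ k ≤ L, (Multiset.map f Finset.univ.val).esymm k
      = (Multiset.map g Finset.univ.val).esymm k := by
  intro k
  induction k using Nat.strong_induction_on with
  | _ k ih =>
    intro hk
    rcases Nat.eq_zero_or_pos k with rfl | hk0
    · simp [Multiset.esymm]
    · have hc : (k : ℝ) ≠ 0 := Nat.cast_ne_zero.mpr hk0.ne'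
      apply mul_left_cancel₀ hc
      rw [newton_real f k, newton_real g k]
      congr 1
      refine Finset.sum_congr rfl fun b hb => ?_
      rw [Finset.mem_filter, Finset.HasAntidiagonal.mem_antidiagonal] at hb
      rw [ih b.1 hb.2 (le_trans hb.2.le hk), h b.2 (by omega)]

private lemma multiset_eq_of_esymm {L : ℕ} (f g : Fin L → ℝ)
    (h : ∀ k ≤ L, (Multiset.map f Finset.univ.val).esymm k
      = (Multiset.map g Finset.univ.val).esymm k) :
    Multiset.map f Finset.univ.val = Multiset.map g Finset.univ.val := by
  classical
  set A := Multiset.map f Finset.univ.val with hA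
  set B := Multiset.map g Finset.univ.val with hB
  have hcA : Multiset.card A = L := by simp [hA]
  have hcB : Multiset.card B = L := by simp [hB]
  have key : ∀ s : Multiset ℝ,
      (s.map fun r => Polynomial.X + Polynomial.C r)
        = ((s.map Neg.neg).map fun r => Polynomial.X - Polynomial.C r) := by
    intro s
    rw [Multiset.map_map]
    refine Multiset.map_congr rfl fun r _ => ?_
    simp [sub_neg_eq_add]
  have hprod : ((A.map Neg.neg).map fun r => Polynomial.X - Polynomial.C r).prod
      = ((B.map Neg.neg).map fun r => Polynomial.X - Polynomial.C r).prod := by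
    rw [← key, ← key, Multiset.prod_X_add_C_eq_sum_esymm, Multiset.prod_X_add_C_eq_sum_esymm,
      hcA, hcB]
    refine Finset.sum_congr rfl fun j hj => ?_
    rw [h j (by simpa using Nat.lt_succ_iff.mp (Finset.mem_range.mp hj))]
  have hroots := congrArg Polynomial.roots hprod
  rw [Polynomial.roots_multiset_prod_X_sub_C, Polynomial.roots_multiset_prod_X_sub_C] at hroots
  exact Multiset.map_injective neg_injective hroots

noncomputable def Qfn (M : ℕ) (lam t : ℝ) : ℝ :=
  ∏ r ∈ Finset.range (M + 1), (lam ^ 2 + (t + (r : ℝ) - (M : ℝ) / 2) ^ 2)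

private lemma Qfn_neg (M : ℕ) (lam t : ℝ) : Qfn M lam (-t) = Qfn M lam t := by
  unfold Qfn
  rw [← Finset.prod_range_reflect]
  refine Finset.prod_congr rfl fun r hr => ?_
  have hr' : r ≤ M := Nat.lt_succ_iff.mp (Finset.mem_range.mp hr)
  have : ((M + 1 - 1 - r : ℕ) : ℝ) = (M : ℝ) - r := by
    rw [Nat.sub_sub]
    rw [Nat.cast_sub (by omega : 1 + r ≤ M + 1)]
    push_cast
    ring
  rw [this]
  ring

private lemma Qfn_sq (M : ℕ) (lam t : ℝ) : Qfn M lam (Real.sqrt (t ^ 2)) = Qfn M lam t := by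
  rw [Real.sqrt_sq_eq_abs]
  rcases abs_choice t with h | h
  · rw [h]
  · rw [h, Qfn_neg]

private lemma prod_eq_of_multiset_eq {L : ℕ} (x y : Fin L → ℝ)
    (h : Multiset.map (fun ℓ => x ℓ ^ 2) Finset.univ.val
       = Multiset.map (fun ℓ => y ℓ ^ 2) Finset.univ.val)
    (F : ℝ → ℝ) : ∏ ℓ, F (x ℓ ^ 2) = ∏ ℓ, F (y ℓ ^ 2) := by
  have h1 : ∏ ℓ, F (x ℓ ^ 2)
      = ((Multiset.map (fun ℓ => x ℓ ^ 2) Finset.univ.val).map F).prod := by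
    rw [Multiset.map_map]; rfl
  have h2 : ∏ ℓ, F (y ℓ ^ 2)
      = ((Multiset.map (fun ℓ => y ℓ ^ 2) Finset.univ.val).map F).prod := by
    rw [Multiset.map_map]; rfl
  rw [h1, h2, h]

private lemma sum_eq_of_multiset_eq {L : ℕ} (x y : Fin L → ℝ)
    (h : Multiset.map (fun ℓ => x ℓ ^ 2) Finset.univ.val
       = Multiset.map (fun ℓ => y ℓ ^ 2) Finset.univ.val)
    (F : ℝ → ℝ) : ∑ ℓ, F (x ℓ ^ 2) = ∑ ℓ, F (y ℓ ^ 2) := by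
  have h1 : ∑ ℓ, F (x ℓ ^ 2)
      = ((Multiset.map (fun ℓ => x ℓ ^ 2) Finset.univ.val).map F).sum := by
    rw [Multiset.map_map]; rfl
  have h2 : ∑ ℓ, F (y ℓ ^ 2)
      = ((Multiset.map (fun ℓ => y ℓ ^ 2) Finset.univ.val).map F).sum := by
    rw [Multiset.map_map]; rfl
  rw [h1, h2, h]

private lemma bethe_of_multiset {L : ℕ} (γ : Fin L → ℝ) (a : Fin L → ℕ)
    (hms : Multiset.map (fun ℓ => (γ ℓ + (a ℓ : ℝ)/2) ^ 2) Finset.univ.val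
         = Multiset.map (fun ℓ => (γ ℓ - (a ℓ : ℝ)/2) ^ 2) Finset.univ.val) :
    (∀ M : ℕ, ∀ lam : ℝ,
      (∀ ℓ : Fin L, ∀ r ∈ Finset.range (M + 1),
        ((lam : ℂ) + Complex.I * (γ ℓ : ℂ))
            - Complex.I * (((a ℓ : ℝ) - (M : ℝ) + 2 * (r : ℝ) : ℝ) : ℂ) / 2 ≠ 0 ∧
        ((lam : ℂ) - Complex.I * (γ ℓ : ℂ))
            + Complex.I * (((a ℓ : ℝ) - (M : ℝ) + 2 * (r : ℝ) : ℝ) : ℂ) / 2 ≠ 0) →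
      ∏ ℓ : Fin L, ∏ r ∈ Finset.range (M + 1),
        eFn ((a ℓ : ℝ) - (M : ℝ) + 2 * (r : ℝ)) ((lam : ℂ) + Complex.I * (γ ℓ : ℂ)) *
        eFn (-((a ℓ : ℝ) - (M : ℝ) + 2 * (r : ℝ))) ((lam : ℂ) - Complex.I * (γ ℓ : ℂ)) = 1) := by
  intro M lam hne
  simp only [term_eq]
  have hD : ∀ ℓ : Fin L, ∀ r ∈ Finset.range (M + 1),
      lam ^ 2 + (γ ℓ - ((a ℓ : ℝ) - (M : ℝ) + 2 * (r : ℝ)) / 2) ^ 2 ≠ 0 := by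
    intro ℓ r hr hzero
    have hl : lam = 0 := by nlinarith [sq_nonneg (γ ℓ - ((a ℓ : ℝ) - (M : ℝ) + 2 * (r : ℝ)) / 2)]
    have hg : γ ℓ - ((a ℓ : ℝ) - (M : ℝ) + 2 * (r : ℝ)) / 2 = 0 := by nlinarith [sq_nonneg lam]
    apply (hne ℓ r hr).1
    have heq : ((lam : ℂ) + Complex.I * (γ ℓ : ℂ))
        - Complex.I * (((a ℓ : ℝ) - (M : ℝ) + 2 * (r : ℝ) : ℝ) : ℂ) / 2
        = (lam : ℂ) + Complex.I * ((γ ℓ - ((a ℓ : ℝ) - (M : ℝ) + 2 * (r : ℝ)) / 2 : ℝ) : ℂ) := by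
      push_cast; ring
    rw [heq, hg, hl]
    simp
  have hsplit : (∏ ℓ : Fin L, ∏ r ∈ Finset.range (M + 1),
      (((lam ^ 2 + (γ ℓ + ((a ℓ : ℝ) - (M : ℝ) + 2 * (r : ℝ)) / 2) ^ 2 : ℝ) : ℂ) /
       ((lam ^ 2 + (γ ℓ - ((a ℓ : ℝ) - (M : ℝ) + 2 * (r : ℝ)) / 2) ^ 2 : ℝ) : ℂ)))
      = (((∏ ℓ : Fin L, ∏ r ∈ Finset.range (M + 1),
          (lam ^ 2 + (γ ℓ + ((a ℓ : ℝ) - (M : ℝ) + 2 * (r : ℝ)) / 2) ^ 2) : ℝ) : ℂ) /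
        ((∏ ℓ : Fin L, ∏ r ∈ Finset.range (M + 1),
          (lam ^ 2 + (γ ℓ - ((a ℓ : ℝ) - (M : ℝ) + 2 * (r : ℝ)) / 2) ^ 2) : ℝ) : ℂ)) := by
    rw [Finset.prod_congr rfl (fun ℓ _ => Finset.prod_div_distrib _ _), Finset.prod_div_distrib]
    push_cast
    ring
  rw [hsplit, div_eq_one_iff_eq]
  · rw [Complex.ofReal_inj]
    calc ∏ ℓ : Fin L, ∏ r ∈ Finset.range (M + 1),
          (lam ^ 2 + (γ ℓ + ((a ℓ : ℝ) - (M : ℝ) + 2 * (r : ℝ)) / 2) ^ 2)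
        = ∏ ℓ : Fin L, Qfn M lam (γ ℓ + (a ℓ : ℝ) / 2) := by
          refine Finset.prod_congr rfl fun ℓ _ => Finset.prod_congr rfl fun r _ => by ring
      _ = ∏ ℓ : Fin L, Qfn M lam (Real.sqrt ((γ ℓ + (a ℓ : ℝ) / 2) ^ 2)) := by
          simp only [Qfn_sq]
      _ = ∏ ℓ : Fin L, Qfn M lam (Real.sqrt ((γ ℓ - (a ℓ : ℝ) / 2) ^ 2)) :=
          prod_eq_of_multiset_eq _ _ hms (fun u => Qfn M lam (Real.sqrt u))
      _ = ∏ ℓ : Fin L, Qfn M lam (γ ℓ - (a ℓ : ℝ) / 2) := by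
          simp only [Qfn_sq]
      _ = ∏ ℓ : Fin L, ∏ r ∈ Finset.range (M + 1),
          (lam ^ 2 + (γ ℓ - ((a ℓ : ℝ) - (M : ℝ) + 2 * (r : ℝ)) / 2) ^ 2) := by
          refine Finset.prod_congr rfl fun ℓ _ => ?_
          unfold Qfn
          rw [← Finset.prod_range_reflect]
          refine Finset.prod_congr rfl fun r hr => ?_
          have hr' : r ≤ M := Nat.lt_succ_iff.mp (Finset.mem_range.mp hr)
          have hc : ((M + 1 - 1 - r : ℕ) : ℝ) = (M : ℝ) - r := by
            rw [Nat.sub_sub, Nat.cast_sub (by omega : 1 + r ≤ M + 1)]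
            push_cast; ring
          rw [hc]
          ring
  · rw [Complex.ofReal_ne_zero, Finset.prod_ne_zero_iff]
    intro ℓ _
    rw [Finset.prod_ne_zero_iff]
    intro r hr
    exact hD ℓ r hr

private lemma multiset_of_bethe {L : ℕ} (γ : Fin L → ℝ) (a : Fin L → ℕ)
    (h : ∀ M : ℕ, ∀ lam : ℝ,
      (∀ ℓ : Fin L, ∀ r ∈ Finset.range (M + 1),
        ((lam : ℂ) + Complex.I * (γ ℓ : ℂ))
            - Complex.I * (((a ℓ : ℝ) - (M : ℝ) + 2 * (r : ℝ) : ℝ) : ℂ) / 2 ≠ 0 ∧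
        ((lam : ℂ) - Complex.I * (γ ℓ : ℂ))
            + Complex.I * (((a ℓ : ℝ) - (M : ℝ) + 2 * (r : ℝ) : ℝ) : ℂ) / 2 ≠ 0) →
      ∏ ℓ : Fin L, ∏ r ∈ Finset.range (M + 1),
        eFn ((a ℓ : ℝ) - (M : ℝ) + 2 * (r : ℝ)) ((lam : ℂ) + Complex.I * (γ ℓ : ℂ)) *
        eFn (-((a ℓ : ℝ) - (M : ℝ) + 2 * (r : ℝ))) ((lam : ℂ) - Complex.I * (γ ℓ : ℂ)) = 1) :
    Multiset.map (fun ℓ => (γ ℓ + (a ℓ : ℝ)/2) ^ 2) Finset.univ.val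
      = Multiset.map (fun ℓ => (γ ℓ - (a ℓ : ℝ)/2) ^ 2) Finset.univ.val := by
  have key : ∀ lam : ℝ, lam ≠ 0 →
      ∏ ℓ : Fin L, (lam ^ 2 + (γ ℓ + (a ℓ : ℝ)/2) ^ 2)
        = ∏ ℓ : Fin L, (lam ^ 2 + (γ ℓ - (a ℓ : ℝ)/2) ^ 2) := by
    intro lam hlam
    have h0 := h 0 lam (by
      intro ℓ r hr
      constructor
      · intro hc
        apply hlam
        simpa using congrArg Complex.re hc
      · intro hc
        apply hlam
        simpa using congrArg Complex.re hc)
    simp only [zero_add, Finset.prod_range_one, Nat.cast_zero, mul_zero, add_zero,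
      sub_zero, term_eq] at h0
    rw [Finset.prod_div_distrib] at h0
    have hDne : ((∏ ℓ : Fin L,
        (lam ^ 2 + (γ ℓ - (a ℓ : ℝ) / 2) ^ 2) : ℝ) : ℂ) ≠ 0 := by
      rw [Complex.ofReal_ne_zero, Finset.prod_ne_zero_iff]
      intro ℓ _
      positivity
    rw [← Complex.ofReal_prod, ← Complex.ofReal_prod, div_eq_one_iff_eq hDne,
      Complex.ofReal_inj] at h0
    exact h0
  have hpoly : (∏ ℓ : Fin L, (Polynomial.X - Polynomial.C (-((γ ℓ + (a ℓ : ℝ)/2) ^ 2))))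
      = ∏ ℓ : Fin L, (Polynomial.X - Polynomial.C (-((γ ℓ - (a ℓ : ℝ)/2) ^ 2))) := by
    apply Polynomial.eq_of_infinite_eval_eq
    apply Set.Infinite.mono _ (Set.Ioi_infinite (0:ℝ))
    intro u hu
    have hu' : (0:ℝ) < u := hu
    have hk := key (Real.sqrt u) (by positivity)
    rw [Real.sq_sqrt hu'.le] at hk
    simp only [Set.mem_setOf_eq, Polynomial.eval_prod, Polynomial.eval_sub,
      Polynomial.eval_X, Polynomial.eval_C, sub_neg_eq_add]
    exact hk
  have hmap : ∀ f : Fin L → ℝ, (∏ ℓ : Fin L, (Polynomial.X - Polynomial.C (-(f ℓ ^ 2))))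
      = ((Multiset.map (fun ℓ => -(f ℓ ^ 2)) Finset.univ.val).map
          fun c => Polynomial.X - Polynomial.C c).prod := by
    intro f
    rw [Multiset.map_map]
    rfl
  rw [hmap (fun ℓ => γ ℓ + (a ℓ : ℝ)/2), hmap (fun ℓ => γ ℓ - (a ℓ : ℝ)/2)] at hpoly
  have hroots := congrArg Polynomial.roots hpoly
  rw [Polynomial.roots_multiset_prod_X_sub_C, Polynomial.roots_multiset_prod_X_sub_C] at hroots
  have hneg : Multiset.map Neg.neg
        (Multiset.map (fun ℓ => (γ ℓ + (a ℓ : ℝ)/2) ^ 2) Finset.univ.val)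
      = Multiset.map Neg.neg
        (Multiset.map (fun ℓ => (γ ℓ - (a ℓ : ℝ)/2) ^ 2) Finset.univ.val) := by
    rw [Multiset.map_map, Multiset.map_map]
    exact hroots
  exact Multiset.map_injective neg_injective hneg

theorem stmt_0 (L : ℕ) (hL : 1 ≤ L) (γ : Fin L → ℝ) (a : Fin L → ℕ) :
    (∀ M : ℕ, ∀ lam : ℝ,
      (∀ ℓ : Fin L, ∀ r ∈ Finset.range (M + 1),
        ((lam : ℂ) + Complex.I * (γ ℓ : ℂ))
            - Complex.I * (((a ℓ : ℝ) - (M : ℝ) + 2 * (r : ℝ) : ℝ) : ℂ) / 2 ≠ 0 ∧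
        ((lam : ℂ) - Complex.I * (γ ℓ : ℂ))
            + Complex.I * (((a ℓ : ℝ) - (M : ℝ) + 2 * (r : ℝ) : ℝ) : ℂ) / 2 ≠ 0) →
      ∏ ℓ : Fin L, ∏ r ∈ Finset.range (M + 1),
        eFn ((a ℓ : ℝ) - (M : ℝ) + 2 * (r : ℝ)) ((lam : ℂ) + Complex.I * (γ ℓ : ℂ)) *
        eFn (-((a ℓ : ℝ) - (M : ℝ) + 2 * (r : ℝ))) ((lam : ℂ) - Complex.I * (γ ℓ : ℂ)) = 1) ↔
    (∀ p : ℕ, p ≤ L →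
      ∑ ℓ : Fin L, (γ ℓ + (a ℓ : ℝ) / 2) ^ (2 * p) =
      ∑ ℓ : Fin L, (γ ℓ - (a ℓ : ℝ) / 2) ^ (2 * p)) := by
  constructor
  · intro h p hp
    have hms := multiset_of_bethe γ a h
    have hsum := sum_eq_of_multiset_eq (fun ℓ => γ ℓ + (a ℓ : ℝ)/2)
      (fun ℓ => γ ℓ - (a ℓ : ℝ)/2) hms (fun u => u ^ p)
    simpa [pow_mul] using hsum
  · intro h
    have hpow : ∀ p ≤ L,
        ∑ i : Fin L, ((γ i + (a i : ℝ)/2) ^ 2) ^ p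
          = ∑ i : Fin L, ((γ i - (a i : ℝ)/2) ^ 2) ^ p := by
      intro p hp
      simpa [pow_mul] using h p hp
    have hes := esymm_eq (fun ℓ => (γ ℓ + (a ℓ : ℝ)/2) ^ 2)
      (fun ℓ => (γ ℓ - (a ℓ : ℝ)/2) ^ 2) hpow
    have hms := multiset_eq_of_esymm _ _ hes
    exact bethe_of_multiset γ a hms
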